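/- Let Q be a finite set and T a set of unitary transformations of Q. The subsemigroup of transformations generated by T under composition is aperiodic (every element s satisfies s^(k+1) = s^k for some k ≥ 1) if and only if T contains no k-cyclic subset with k ≥ 3 (a subset {(q0→q1), …, (q_{k−1}→q0)} with q0,…,q_{k−1} pairwise distinct) and no subset of type T6 (six transformations (q0→q1), (q1→q0), (q1→q2), (q1→q3), (q2→q1), (q3→q1) for pairwise distinct q0, q1, q2, q3). -/

import Mathlib

/-- The unitary transformation `(p→q)`: sends `p` to `q` and fixes every other element. -/
def unitaryT {Q : Type*} [DecidableEq Q] (p q : Q) : Function.End Q :=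
  fun r => if r = p then q else r

namespace Stmt10Aux

variable {Q : Type*} [DecidableEq Q]

theorem unitaryT_self (p q : Q) : unitaryT p q p = q := if_pos rfl

theorem unitaryT_ne {r p : Q} (q : Q) (h : r ≠ p) : unitaryT p q r = r := if_neg h

theorem get_eq_get (P : List Q) {i j : ℕ} (hi : i < P.length) (hj : j < P.length)
    (h : i = j) : P.get ⟨i, hi⟩ = P.get ⟨j, hj⟩ := by subst h; rfl

theorem end_mul_apply (f g : Function.End Q) (x : Q) : (f * g) x = f (g x) := rfl

theorem end_one_apply (x : Q) : (1 : Function.End Q) x = x := rfl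

theorem end_pow_mul_apply (s : Function.End Q) (a b : ℕ) (x : Q) :
    (s ^ a) ((s ^ b) x) = (s ^ (a + b)) x := by rw [pow_add]; rfl

theorem end_pow_succ_apply (s : Function.End Q) (a : ℕ) (x : Q) :
    (s ^ (a + 1)) x = s ((s ^ a) x) := by rw [pow_succ']; rfl

/-- The edge relation of `T`. -/
def E (T : Set (Function.End Q)) (p q : Q) : Prop := p ≠ q ∧ unitaryT p q ∈ T

/-- Reachability. -/
def R (T : Set (Function.End Q)) : Q → Q → Prop := Relation.ReflTransGen (E T)

variable {T : Set (Function.End Q)}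

theorem list_prod_mem_closure :
    ∀ l : List (Function.End Q), l ≠ [] → (∀ g ∈ l, g ∈ T) →
      l.prod ∈ Subsemigroup.closure T := by
  intro l
  induction l with
  | nil => intro h; exact absurd rfl h
  | cons g l ih =>
    intro _ hmem
    rcases eq_or_ne l [] with rfl | hl
    · simpa using Subsemigroup.subset_closure (hmem g (by simp))
    · rw [List.prod_cons]
      exact Subsemigroup.mul_mem _ (Subsemigroup.subset_closure (hmem g (by simp)))
        (ih hl fun g' hg' => hmem g' (by simp [hg']))

theorem exists_list_of_mem_closure {s : Function.End Q}
    (hs : s ∈ Subsemigroup.closure T) :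
    ∃ l : List (Function.End Q), l ≠ [] ∧ (∀ g ∈ l, g ∈ T) ∧ l.prod = s := by
  induction hs using Subsemigroup.closure_induction with
  | mem x hx => exact ⟨[x], by simp, by simpa using hx, by simp⟩
  | mul x y _ _ ihx ihy =>
    obtain ⟨l1, h1, h2, h3⟩ := ihx
    obtain ⟨l2, h4, h5, h6⟩ := ihy
    refine ⟨l1 ++ l2, by simp [h1], ?_, by simp [List.prod_append, h3, h6]⟩
    intro g hg
    rcases List.mem_append.mp hg with h | h
    · exact h2 g h
    · exact h5 g h

theorem reach_apply (hT : ∀ t ∈ T, ∃ p q : Q, p ≠ q ∧ t = unitaryT p q)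
    {t : Function.End Q} (ht : t ∈ T) (z : Q) : R T z (t z) := by
  obtain ⟨p, q, hpq, rfl⟩ := hT t ht
  by_cases hz : z = p
  · subst hz
    rw [unitaryT_self]
    exact Relation.ReflTransGen.single ⟨hpq, ht⟩
  · rw [unitaryT_ne _ hz]
    exact Relation.ReflTransGen.refl

theorem reach_prod (hT : ∀ t ∈ T, ∃ p q : Q, p ≠ q ∧ t = unitaryT p q) :
    ∀ l : List (Function.End Q), (∀ g ∈ l, g ∈ T) → ∀ z : Q, R T z (l.prod z) := by
  intro l
  induction l with
  | nil => intro _ z; simp only [List.prod_nil]; exact Relation.ReflTransGen.refl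
  | cons g l ih =>
    intro hmem z
    rw [List.prod_cons, end_mul_apply]
    exact (ih (fun g' hg' => hmem g' (by simp [hg'])) z).trans
      (reach_apply hT (hmem g (by simp)) _)

theorem exists_nodup_chain_aux :
    ∀ (n : ℕ) (P : List Q) (a b : Q), P.length ≤ n →
      List.Chain (E T) a P → (a :: P).getLast? = some b →
      ∃ P', List.Chain (E T) a P' ∧ (a :: P').getLast? = some b ∧
        (a :: P').Nodup ∧ ∀ x ∈ P', x ∈ P := by
  intro n
  induction n with
  | zero =>
    intro P a b hlen hc hl
    have hP : P = [] := List.eq_nil_of_length_eq_zero (Nat.le_zero.mp hlen)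
    subst hP
    exact ⟨[], List.Chain.nil, hl, by simp, by simp⟩
  | succ n ih =>
    intro P a b hlen hc hl
    by_cases ha : a ∈ P
    · obtain ⟨P1, P2, rfl⟩ := List.append_of_mem ha
      have hc' : List.Chain' (E T) (a :: (P1 ++ a :: P2)) := hc
      have hsuf : (a :: P2) <:+ (a :: (P1 ++ a :: P2)) := ⟨a :: P1, by simp⟩
      have hc2 : List.Chain (E T) a P2 := hc'.suffix hsuf
      have hl2 : (a :: P2).getLast? = some b := by
        have hsome : (a :: P2).getLast? = some ((a :: P2).getLast (List.cons_ne_nil _ _)) :=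
          List.getLast?_eq_getLast _
        rw [← hl, show a :: (P1 ++ a :: P2) = (a :: P1) ++ (a :: P2) from by simp,
          List.getLast?_append, hsome]
        rfl
      have hlen2 : P2.length ≤ n := by
        simp only [List.length_append, List.length_cons] at hlen; omega
      obtain ⟨P', h1, h2, h3, h4⟩ := ih P2 a b hlen2 hc2 hl2
      exact ⟨P', h1, h2, h3, fun x hx => by
        have := h4 x hx; simp only [List.mem_append, List.mem_cons]; tauto⟩
    · cases P with
      | nil => exact ⟨[], hc, hl, by simp, by simp⟩
      | cons c P' =>
        have hac : E T a c := (List.chain_cons.mp hc).1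
        have hcP : List.Chain (E T) c P' := (List.chain_cons.mp hc).2
        have hl' : (c :: P').getLast? = some b := by
          rw [← hl]; exact (List.getLast?_cons_cons).symm
        have hlen' : P'.length ≤ n := by simp at hlen; omega
        obtain ⟨P'', h1, h2, h3, h4⟩ := ih P' c b hlen' hcP hl'
        refine ⟨c :: P'', List.chain_cons.mpr ⟨hac, h1⟩, ?_, ?_, ?_⟩
        · rw [List.getLast?_cons_cons]; exact h2
        · refine List.nodup_cons.mpr ⟨?_, h3⟩
          intro hmem
          rcases List.mem_cons.mp hmem with h | h
          · exact ha (h ▸ List.mem_cons_self)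
          · exact ha (List.mem_cons_of_mem _ (h4 a h))
        · intro x hx
          rcases List.mem_cons.mp hx with h | h
          · simp [h]
          · exact List.mem_cons_of_mem _ (h4 x h)

theorem exists_nodup_path {a b : Q} (h : R T a b) :
    ∃ P, List.Chain (E T) a P ∧ (a :: P).getLast? = some b ∧ (a :: P).Nodup := by
  obtain ⟨l, hc, hl⟩ := List.exists_isChain_cons_of_relationReflTransGen h
  have hl' : (a :: l).getLast? = some b := by
    rw [List.getLast?_eq_getLast (List.cons_ne_nil _ _), hl]
  obtain ⟨P', h1, h2, h3, _⟩ := exists_nodup_chain_aux l.length l a b le_rfl hc hl'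
  exact ⟨P', h1, h2, h3⟩

/-- no simple cycles of length `≥ 3`. -/
def NoCycle (T : Set (Function.End Q)) : Prop :=
  ¬ ∃ (k : ℕ) (_ : 3 ≤ k) (q : Fin k → Q), Function.Injective q ∧
      ∀ i : Fin k, unitaryT (q i) (q (i + ⟨1, Nat.lt_of_lt_of_le (by decide) ‹3 ≤ k›⟩)) ∈ T

theorem bidir (h1 : NoCycle T) {p q : Q} (hpq : E T p q) (hr : R T q p) : E T q p := by
  obtain ⟨P, hc, hl, hnd⟩ := exists_nodup_path hr
  cases P with
  | nil =>
    exfalso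
    apply hpq.1
    simpa using hl.symm
  | cons c P' =>
    cases P' with
    | nil =>
      have hcp : c = p := by simpa using hl
      subst hcp
      exact (List.chain_cons.mp hc).1
    | cons d P'' =>
      exfalso
      apply h1
      set l : List Q := q :: c :: d :: P'' with hldef
      have hlen : 3 ≤ l.length := by simp [hldef]
      refine ⟨l.length, hlen, l.get, List.nodup_iff_injective_get.mp hnd, ?_⟩
      intro i
      by_cases hi : (i : ℕ) < l.length - 1
      · have hadd : ((i + ⟨1, by omega⟩ : Fin l.length) : ℕ) = (i : ℕ) + 1 := by
          have hlt : (i : ℕ) + 1 < l.length := by omega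
          simp [Fin.add_def, Nat.mod_eq_of_lt hlt]
        have hc2 : List.Chain' (E T) l := hc
        have hstep := List.isChain_iff_getElem.mp hc2 i (by omega)
        have hgoal : E T (l.get i) (l.get (i + ⟨1, by omega⟩)) := by
          have : (i + ⟨1, by omega⟩ : Fin l.length) = ⟨(i : ℕ) + 1, by omega⟩ :=
            Fin.ext hadd
          rw [this]
          exact hstep
        exact hgoal.2
      · have hival : (i : ℕ) = l.length - 1 := by have := i.isLt; omega
        have hadd : ((i + ⟨1, by omega⟩ : Fin l.length) : ℕ) = 0 := by
          have h3 : 0 < l.length := by omega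
          simp [Fin.add_def, hival]
          have heq : l.length - 1 + 1 = l.length := by omega
          simp [heq]
        have hglast : l.getLast (List.cons_ne_nil _ _) = p := by
          have h2 := List.getLast?_eq_getLast (l := l) (List.cons_ne_nil _ _)
          rw [h2] at hl
          exact Option.some.inj hl
        have h1g : l.get i = p := by
          rw [← hglast, List.getLast_eq_getElem]
          simp [List.get_eq_getElem, hival]
        have h0g : l.get (i + ⟨1, by omega⟩) = q := by
          have heq0 : (i + ⟨1, by omega⟩ : Fin l.length) = ⟨0, by omega⟩ := Fin.ext hadd
          rw [heq0]
          simp [hldef]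
        rw [h1g, h0g]
        exact hpq.2



section PathLemma

variable {Q : Type*} [DecidableEq Q] [Finite Q]

theorem exists_path_cover (A : Q → Q → Prop) (C : Set Q)
    (Asymm : ∀ u v, A u v → A v u)
    (Airr : ∀ u v, A u v → u ≠ v)
    (Amem : ∀ u v, A u v → u ∈ C ∧ v ∈ C)
    (Anocycle : ¬ ∃ (k : ℕ) (_ : 3 ≤ k) (q : Fin k → Q), Function.Injective q ∧
        ∀ i : Fin k, A (q i) (q (i + ⟨1, Nat.lt_of_lt_of_le (by decide) ‹3 ≤ k›⟩)))
    (Adeg : ∀ v a b c, a ≠ b → a ≠ c → b ≠ c → A v a → A v b → A v c → False)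
    (Cconn : ∀ p q, p ∈ C → q ∈ C → Relation.ReflTransGen A p q)
    (Cne : C.Nonempty) :
    ∃ P : List Q, P.Nodup ∧ (∀ c ∈ C, c ∈ P) ∧ (∀ x ∈ P, x ∈ C) ∧
      ∀ u v, A u v → P.idxOf v = P.idxOf u + 1 ∨ P.idxOf u = P.idxOf v + 1 := by
  obtain ⟨_⟩ := nonempty_fintype Q
  set S : Set ℕ :=
    {n | ∃ P : List Q, (P ≠ [] ∧ P.Nodup ∧ List.Chain' A P ∧ ∀ x ∈ P, x ∈ C) ∧
      P.length = n} with hSdef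
  obtain ⟨x₀, hx₀⟩ := Cne
  have hS0 : S.Nonempty := ⟨1, ⟨[x₀], ⟨by simp, by simp, List.isChain_singleton _,
    by simpa using hx₀⟩, by simp⟩⟩
  have hbdd : BddAbove S := ⟨Fintype.card Q, by
    rintro n ⟨P, hP, rfl⟩
    exact hP.2.1.length_le_card⟩
  obtain ⟨P, hPgood, hPlen⟩ := Nat.sSup_mem hS0 hbdd
  obtain ⟨hPne, hPnd, hPch, hPC⟩ := hPgood
  have hmax : ∀ P' : List Q,
      (P' ≠ [] ∧ P'.Nodup ∧ List.Chain' A P' ∧ ∀ x ∈ P', x ∈ C) →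
      P'.length ≤ P.length := by
    intro P' h
    rw [hPlen]
    exact le_csSup hbdd ⟨P', h, rfl⟩
  have boundary : ∀ (W : List Q) (a : Q), List.Chain A a W → a ∉ P →
      ((a :: W).getLast (List.cons_ne_nil _ _)) ∈ P →
      ∃ w v, A w v ∧ w ∉ P ∧ v ∈ P := by
    intro W
    induction W with
    | nil =>
      intro a _ ha hlast
      simp only [List.getLast_singleton] at hlast
      exact absurd hlast ha
    | cons c W' ih =>
      intro a hch ha hlast
      rcases List.chain_cons.mp hch with ⟨hac, hch'⟩
      by_cases hcmem : c ∈ P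
      · exact ⟨a, c, hac, ha, hcmem⟩
      · exact ih c hch' hcmem (by rwa [List.getLast_cons_cons] at hlast)
  have hcover : ∀ c ∈ C, c ∈ P := by
    intro c hcC
    by_contra hc
    have hp₀ : P.head hPne ∈ P := List.head_mem hPne
    have hp₀C : P.head hPne ∈ C := hPC _ hp₀
    obtain ⟨W, hW, hWl⟩ :=
      List.exists_isChain_cons_of_relationReflTransGen (Cconn c _ hcC hp₀C)
    obtain ⟨w, v, hwv, hwP, hvP⟩ := boundary W c hW hc (by rw [hWl]; exact hp₀)
    have hwC : w ∈ C := (Amem _ _ hwv).1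
    have hvC : v ∈ C := (Amem _ _ hwv).2
    by_cases hvhead : v = P.head hPne
    · have hlong : (w :: P).length ≤ P.length := by
        apply hmax
        refine ⟨by simp, List.nodup_cons.mpr ⟨hwP, hPnd⟩, ?_, ?_⟩
        · rw [show List.Chain' A (w :: P) = List.IsChain A (w :: P) from rfl, List.isChain_cons]
          refine ⟨?_, hPch⟩
          intro y hy
          rw [List.head?_eq_head hPne, Option.mem_some_iff] at hy
          rw [← hy, ← hvhead]
          exact hwv
        · intro x hx
          rcases List.mem_cons.mp hx with h | h
          · exact h ▸ hwC
          · exact hPC x h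
      simp at hlong
    · by_cases hvlast : v = P.getLast hPne
      · have hlong : (P ++ [w]).length ≤ P.length := by
          apply hmax
          refine ⟨by simp, ?_, ?_, ?_⟩
          · rw [List.nodup_append]
            refine ⟨hPnd, by simp, ?_⟩
            intro x hx y hy hxy
            simp only [List.mem_singleton] at hy
            exact hwP (hy ▸ hxy ▸ hx)
          · rw [show List.Chain' A (P ++ [w]) = List.IsChain A (P ++ [w]) from rfl, List.isChain_append]
            refine ⟨hPch, List.isChain_singleton _, ?_⟩
            intro x hx y hy
            simp only [List.head?_cons, Option.mem_some_iff] at hy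
            rw [List.getLast?_eq_getLast hPne, Option.mem_some_iff] at hx
            rw [← hy, ← hx, ← hvlast]
            exact Asymm _ _ hwv
          · intro x hx
            rcases List.mem_append.mp hx with h | h
            · exact hPC x h
            · simp only [List.mem_singleton] at h
              exact h ▸ hwC
        simp at hlong
      · -- interior vertex: degree-3 contradiction
        have hvlt : P.idxOf v < P.length := List.idxOf_lt_length_iff.mpr hvP
        have hgetv : P.get ⟨P.idxOf v, hvlt⟩ = v := List.idxOf_get hvlt
        have hi0 : 0 < P.idxOf v := by
          rcases Nat.eq_zero_or_pos (P.idxOf v) with h | h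
          · exfalso
            apply hvhead
            rw [← hgetv]
            have : P.get ⟨P.idxOf v, hvlt⟩ = P.get ⟨0, by omega⟩ := by
              congr 1
              exact Fin.ext h
            rw [this]
            exact List.get_mk_zero _
          · exact h
        have hilast : P.idxOf v < P.length - 1 := by
          rcases Nat.lt_or_ge (P.idxOf v) (P.length - 1) with h | h
          · exact h
          · exfalso
            apply hvlast
            have hieq : P.idxOf v = P.length - 1 := by omega
            rw [← hgetv, List.getLast_eq_getElem]
            simp only [List.get_eq_getElem, hieq]
        have hprev : A (P.get ⟨P.idxOf v - 1, by omega⟩) (P.get ⟨P.idxOf v - 1 + 1, by omega⟩) := List.isChain_iff_getElem.mp hPch (P.idxOf v - 1) (by omega)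
        have hnext : A (P.get ⟨P.idxOf v, hvlt⟩) (P.get ⟨P.idxOf v + 1, by omega⟩) := List.isChain_iff_getElem.mp hPch (P.idxOf v) (by omega)
        have hi1 : P.idxOf v - 1 + 1 = P.idxOf v := by omega
        rw [hgetv] at hnext
        have hprevv : A (P.get ⟨P.idxOf v - 1, by omega⟩) v := by
          have h2 : P.get ⟨P.idxOf v - 1 + 1, by omega⟩ = v :=
            (get_eq_get P (by omega) hvlt hi1).trans hgetv
          have h3 := hprev
          rw [h2] at h3
          exact h3
        have hprevmem : P.get ⟨P.idxOf v - 1, by omega⟩ ∈ P := List.get_mem _ _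
        have hnextmem : P.get ⟨P.idxOf v + 1, by omega⟩ ∈ P := List.get_mem _ _
        have hgetinj := List.nodup_iff_injective_get.mp hPnd
        have hpn : P.get ⟨P.idxOf v - 1, by omega⟩ ≠ P.get ⟨P.idxOf v + 1, by omega⟩ := by
          intro h
          have := hgetinj h
          rw [Fin.mk.injEq] at this
          omega
        exact Adeg v _ _ w hpn
          (fun h => hwP (h ▸ hprevmem)) (fun h => hwP (h ▸ hnextmem))
          (Asymm _ _ hprevv) hnext (Asymm _ _ hwv)
  -- adjacency of A-edges in P
  have hgetinj := List.nodup_iff_injective_get.mp hPnd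
  have hclaim : ∀ u v, A u v → P.idxOf u < P.idxOf v →
      P.idxOf v = P.idxOf u + 1 := by
    intro u v huv hlt
    by_contra hne2
    have huP : u ∈ P := hcover u (Amem _ _ huv).1
    have hvP : v ∈ P := hcover v (Amem _ _ huv).2
    have hul : P.idxOf u < P.length := List.idxOf_lt_length_iff.mpr huP
    have hvl : P.idxOf v < P.length := List.idxOf_lt_length_iff.mpr hvP
    have hgap : P.idxOf u + 2 ≤ P.idxOf v := by omega
    apply Anocycle
    set iu := P.idxOf u with hiu
    set iv := P.idxOf v with hiv
    refine ⟨iv - iu + 1, by omega, fun t => P.get ⟨iu + t.1, by omega⟩, ?_, ?_⟩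
    · intro t1 t2 h
      have := hgetinj h
      rw [Fin.mk.injEq] at this
      exact Fin.ext (by omega)
    · intro t
      show A (P.get ⟨iu + (t : ℕ), by omega⟩)
        (P.get ⟨iu + ((t + ⟨1, by omega⟩ : Fin (iv - iu + 1)) : ℕ), by have := (t + ⟨1, by omega⟩ : Fin (iv - iu + 1)).isLt; omega⟩)
      have hadd : ((t + ⟨1, by omega⟩ : Fin (iv - iu + 1)) : ℕ) =
          if (t : ℕ) = iv - iu then 0 else (t : ℕ) + 1 := by
        rcases Nat.lt_or_ge ((t : ℕ) + 1) (iv - iu + 1) with h | h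
        · rw [if_neg (by omega)]
          simp [Fin.add_def, Nat.mod_eq_of_lt h]
        · have ht : (t : ℕ) = iv - iu := by have := t.isLt; omega
          rw [if_pos ht]
          simp [Fin.add_def, ht]
      by_cases hlast : (t : ℕ) = iv - iu
      · -- wrap-around edge: from v back to u
        rw [if_pos hlast] at hadd
        have e1 : P.get ⟨iu + (t : ℕ), by omega⟩ = v :=
          (get_eq_get P (by omega) hvl (by omega)).trans (List.idxOf_get hvl)
        have e2 : P.get ⟨iu + ((t + ⟨1, by omega⟩ : Fin (iv - iu + 1)) : ℕ), by have := (t + ⟨1, by omega⟩ : Fin (iv - iu + 1)).isLt; omega⟩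
            = u :=
          (get_eq_get P (by omega) hul (by rw [hadd]; omega)).trans (List.idxOf_get hul)
        rw [e1, e2]
        exact Asymm _ _ huv
      · rw [if_neg hlast] at hadd
        have hbound : iu + (t : ℕ) < P.length - 1 := by
          have := t.isLt; omega
        have hstep := List.isChain_iff_getElem.mp hPch (iu + (t : ℕ)) (by omega)
        have e3 : P.get ⟨iu + ((t + ⟨1, by omega⟩ : Fin (iv - iu + 1)) : ℕ), by have := (t + ⟨1, by omega⟩ : Fin (iv - iu + 1)).isLt; omega⟩
            = P.get ⟨iu + (t : ℕ) + 1, by omega⟩ :=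
          get_eq_get P (by omega) (by omega) (by rw [hadd]; omega)
        rw [e3]
        exact hstep
  refine ⟨P, hPnd, hcover, hPC, ?_⟩
  intro u v huv
  have hne := Airr _ _ huv
  have huP := hcover u (Amem _ _ huv).1
  have hvP := hcover v (Amem _ _ huv).2
  have hiuv : P.idxOf u ≠ P.idxOf v := by
    intro h
    apply hne
    have hul' : P.idxOf u < P.length := List.idxOf_lt_length_iff.mpr huP
    have hvl' : P.idxOf v < P.length := List.idxOf_lt_length_iff.mpr hvP
    exact ((List.idxOf_get hul').symm.trans
      (get_eq_get P hul' hvl' h)).trans (List.idxOf_get hvl')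
  rcases lt_or_gt_of_ne hiuv with h | h
  · exact Or.inl (hclaim u v huv h)
  · exact Or.inr (hclaim v u (Asymm _ _ huv) h)

end PathLemma

section Order

variable {Q : Type*} [DecidableEq Q]

theorem order_preserved {T : Set (Function.End Q)}
    (hT : ∀ t ∈ T, ∃ p q : Q, p ≠ q ∧ t = unitaryT p q)
    (C : Set Q) (ψ : Q → ℕ)
    (hmono : ∀ u v, u ∈ C → v ∈ C → E T u v → ψ v = ψ u + 1 ∨ ψ u = ψ v + 1)
    (hinj : ∀ u v, u ∈ C → v ∈ C → ψ u = ψ v → u = v) :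
    ∀ l : List (Function.End Q), (∀ g ∈ l, g ∈ T) →
      ∀ a b : Q, (∀ t ∈ l.tails, (t.prod : Function.End Q) a ∈ C ∧ t.prod b ∈ C) →
      l.prod a ≠ l.prod b → ψ a < ψ b → ψ (l.prod a) < ψ (l.prod b) := by
  intro l
  induction l with
  | nil =>
    intro _ a b _ _ hab
    exact hab
  | cons g l ih =>
    intro hmem a b htails hne hlt
    have hgT : g ∈ T := hmem g (by simp)
    have hmem' : ∀ g' ∈ l, g' ∈ T := fun g' h => hmem g' (by simp [h])
    have htails' : ∀ t ∈ l.tails, (t.prod : Function.End Q) a ∈ C ∧ t.prod b ∈ C := by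
      intro t ht
      exact htails t (by rw [List.tails_cons]; exact List.mem_cons_of_mem _ ht)
    have hCa : l.prod a ∈ C := (htails' l (by simp [List.mem_tails])).1
    have hCb : l.prod b ∈ C := (htails' l (by simp [List.mem_tails])).2
    have hprodcons : ∀ x : Q, (g :: l).prod x = g (l.prod x) := fun x => by
      rw [List.prod_cons]; rfl
    have hCa' : g (l.prod a) ∈ C := by
      have := (htails (g :: l) (by simp [List.mem_tails])).1
      rwa [hprodcons] at this
    have hCb' : g (l.prod b) ∈ C := by
      have := (htails (g :: l) (by simp [List.mem_tails])).2
      rwa [hprodcons] at this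
    have hne2 : g (l.prod a) ≠ g (l.prod b) := by
      intro h
      apply hne
      rw [hprodcons, hprodcons, h]
    have hne' : l.prod a ≠ l.prod b := fun h => hne2 (by rw [h])
    have hablt : ψ (l.prod a) < ψ (l.prod b) := ih hmem' a b htails' hne' hlt
    rw [hprodcons, hprodcons]
    obtain ⟨p, q, hpq, hg⟩ := hT g hgT
    subst hg
    by_cases hap : l.prod a = p
    · have hga : unitaryT p q (l.prod a) = q := by rw [hap]; exact unitaryT_self p q
      have hbp : l.prod b ≠ p := fun h => hne' (hap.trans h.symm)
      have hgb : unitaryT p q (l.prod b) = l.prod b := unitaryT_ne q hbp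
      rw [hga, hgb]
      have hqC : q ∈ C := by rwa [hga] at hCa'
      have hpC : p ∈ C := hap ▸ hCa
      have hedge : E T p q := ⟨hpq, hgT⟩
      have hψa : ψ (l.prod a) = ψ p := by rw [hap]
      rcases hmono p q hpC hqC hedge with h | h
      · rcases Nat.lt_or_ge (ψ q) (ψ (l.prod b)) with h2 | h2
        · exact h2
        · exfalso
          have hqb : ψ q = ψ (l.prod b) := by omega
          have : q = l.prod b := hinj _ _ hqC hCb hqb
          apply hne2
          rw [hga, hgb, this]
      · omega
    · by_cases hbp : l.prod b = p
      · have hgb : unitaryT p q (l.prod b) = q := by rw [hbp]; exact unitaryT_self p q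
        have hga : unitaryT p q (l.prod a) = l.prod a := unitaryT_ne q hap
        rw [hga, hgb]
        have hqC : q ∈ C := by rwa [hgb] at hCb'
        have hpC : p ∈ C := hbp ▸ hCb
        have hedge : E T p q := ⟨hpq, hgT⟩
        have hψb : ψ (l.prod b) = ψ p := by rw [hbp]
        rcases hmono p q hpC hqC hedge with h | h
        · omega
        · rcases Nat.lt_or_ge (ψ (l.prod a)) (ψ q) with h2 | h2
          · exact h2
          · exfalso
            have haq : ψ (l.prod a) = ψ q := by omega
            have : l.prod a = q := hinj _ _ hCa hqC haq
            apply hne2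
            rw [hga, hgb, this]
      · rw [unitaryT_ne q hap, unitaryT_ne q hbp]
        exact hablt

end Order

section Main

variable {Q : Type*} [Finite Q] [DecidableEq Q]

theorem aperiodic_of_no_patterns (T : Set (Function.End Q))
    (hT : ∀ t ∈ T, ∃ p q : Q, p ≠ q ∧ t = unitaryT p q)
    (h1 : NoCycle T)
    (h2 : ¬ ∃ q0 q1 q2 q3 : Q,
        q0 ≠ q1 ∧ q0 ≠ q2 ∧ q0 ≠ q3 ∧ q1 ≠ q2 ∧ q1 ≠ q3 ∧ q2 ≠ q3 ∧
        unitaryT q0 q1 ∈ T ∧ unitaryT q1 q0 ∈ T ∧ unitaryT q1 q2 ∈ T ∧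
        unitaryT q1 q3 ∈ T ∧ unitaryT q2 q1 ∈ T ∧ unitaryT q3 q1 ∈ T) :
    ∀ s ∈ Subsemigroup.closure T, ∃ k : ℕ, 1 ≤ k ∧ s ^ (k + 1) = s ^ k := by
  intro s hs
  by_contra hcon
  push_neg at hcon
  obtain ⟨l₀, hl₀ne, hl₀T, hl₀prod⟩ := exists_list_of_mem_closure hs
  have _instF : Finite (Function.End Q) := inferInstanceAs (Finite (Q → Q))
  -- find an idempotent power
  have hfin : ∃ m n : ℕ, m < n ∧ s ^ m = s ^ n := by
    obtain ⟨m, n, hmn, h⟩ := Finite.exists_ne_map_eq_of_infinite (fun n : ℕ => s ^ n)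
    rcases Nat.lt_or_ge m n with h' | h'
    · exact ⟨m, n, h', h⟩
    · exact ⟨n, m, by omega, h.symm⟩
  obtain ⟨m, n, hmn, hpow⟩ := hfin
  have hd1 : 1 ≤ n - m := by omega
  have hmd : s ^ (m + (n - m)) = s ^ m := by
    rw [show m + (n - m) = n by omega]
    exact hpow.symm
  have hshift : ∀ a, m ≤ a → s ^ (a + (n - m)) = s ^ a := by
    intro a ha
    calc s ^ (a + (n - m)) = s ^ ((a - m) + (m + (n - m))) := by congr 1; omega
    _ = s ^ (a - m) * s ^ (m + (n - m)) := pow_add s _ _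
    _ = s ^ (a - m) * s ^ m := by rw [hmd]
    _ = s ^ ((a - m) + m) := (pow_add s _ _).symm
    _ = s ^ a := by congr 1; omega
  have hMm : m + 1 ≤ (m + 1) * (n - m) := Nat.le_mul_of_pos_right _ (by omega)
  set M := (m + 1) * (n - m) with hM
  have hM1 : 1 ≤ M := by omega
  have hMge : m ≤ M := by omega
  have hidem : ∀ t : ℕ, s ^ (M + t * (n - m)) = s ^ M := by
    intro t
    induction t with
    | zero => simp
    | succ t iht =>
      rw [show M + (t + 1) * (n - m) = (M + t * (n - m)) + (n - m) by ring,
        hshift _ (le_trans hMge (Nat.le_add_right M _)), iht]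
  have h2M : s ^ (2 * M) = s ^ M := by
    have he : 2 * M = M + (m + 1) * (n - m) := by rw [hM]; try ring
    rw [he]
    exact hidem (m + 1)
  -- find a moved periodic point
  have hx : ∃ x : Q, s x ≠ x ∧ (s ^ M) x = x := by
    have hne := hcon M hM1
    have hy : ∃ y, (s ^ (M + 1)) y ≠ (s ^ M) y := by
      by_contra h
      push_neg at h
      exact hne (funext h)
    obtain ⟨y, hy⟩ := hy
    refine ⟨(s ^ M) y, ?_, ?_⟩
    · intro h
      apply hy
      rw [end_pow_succ_apply, h]
    · have h3 := end_pow_mul_apply s M M y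
      rw [show M + M = 2 * M by ring, h2M] at h3
      exact h3
  obtain ⟨x₀, hsx₀, hMx₀⟩ := hx
  -- reachability facts
  have hRpow : ∀ (i : ℕ) (z : Q), R T z ((s ^ i) z) := by
    intro i
    induction i with
    | zero => intro z; exact Relation.ReflTransGen.refl
    | succ i ihi =>
      intro z
      have h1' : (s ^ (i + 1)) z = (s ^ i) (s z) := by rw [pow_succ]; rfl
      rw [h1']
      have hz : R T z (s z) := by
        have := reach_prod hT l₀ hl₀T z
        rwa [hl₀prod] at this
      exact hz.trans (ihi (s z))
  have hfixmul : ∀ t : ℕ, (s ^ (M * t)) x₀ = x₀ := by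
    intro t
    induction t with
    | zero => rfl
    | succ t iht =>
      have h3 : (s ^ (M * (t + 1))) x₀ = (s ^ (M * t)) ((s ^ M) x₀) := by
        rw [end_pow_mul_apply, show M * t + M = M * (t + 1) by ring]
      rw [h3, hMx₀, iht]
  have hpowshift : ∀ (i t : ℕ), (s ^ (i + M * t)) x₀ = (s ^ i) x₀ := by
    intro i t
    rw [← end_pow_mul_apply, hfixmul]
  set C : Set Q := {y | R T x₀ y ∧ R T y x₀} with hC
  have horbC : ∀ i : ℕ, (s ^ i) x₀ ∈ C := by
    intro i
    refine ⟨hRpow i x₀, ?_⟩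
    have hle : i ≤ M * (i + 1) := by
      have : i + 1 ≤ M * (i + 1) := Nat.le_mul_of_pos_left _ (by omega)
      omega
    have h1' : (s ^ (M * (i + 1) - i)) ((s ^ i) x₀) = x₀ := by
      rw [end_pow_mul_apply, show M * (i + 1) - i + i = M * (i + 1) by omega, hfixmul]
    have h6 := hRpow (M * (i + 1) - i) ((s ^ i) x₀)
    rwa [h1'] at h6
  have hx₀C : x₀ ∈ C := ⟨Relation.ReflTransGen.refl, Relation.ReflTransGen.refl⟩
  have hbid : ∀ p q : Q, p ∈ C → q ∈ C → E T p q → E T q p := by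
    intro p q hp hq hpq
    exact bidir h1 hpq (hq.2.trans hp.1)
  set A : Q → Q → Prop := fun u v => u ∈ C ∧ v ∈ C ∧ E T u v with hA
  have hAsymm : ∀ u v, A u v → A v u := fun u v h => ⟨h.2.1, h.1, hbid u v h.1 h.2.1 h.2.2⟩
  have hAirr : ∀ u v, A u v → u ≠ v := fun u v h => h.2.2.1
  have hAmem : ∀ u v, A u v → u ∈ C ∧ v ∈ C := fun u v h => ⟨h.1, h.2.1⟩
  have hAnc : ¬ ∃ (k : ℕ) (_ : 3 ≤ k) (q : Fin k → Q), Function.Injective q ∧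
      ∀ i : Fin k, A (q i) (q (i + ⟨1, Nat.lt_of_lt_of_le (by decide) ‹3 ≤ k›⟩)) := by
    rintro ⟨k, hk, q, hqinj, hedge⟩
    exact h1 ⟨k, hk, q, hqinj, fun i => (hedge i).2.2.2⟩
  have hAdeg : ∀ v a b c, a ≠ b → a ≠ c → b ≠ c → A v a → A v b → A v c → False := by
    intro v a b c hab hac hbc hva hvb hvc
    apply h2
    have hva' := hAsymm _ _ hva
    have hvb' := hAsymm _ _ hvb
    have hvc' := hAsymm _ _ hvc
    exact ⟨a, v, b, c, (hva.2.2.1).symm, hab, hac, hvb.2.2.1, hvc.2.2.1, hbc,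
      hva'.2.2.2, hva.2.2.2, hvb.2.2.2, hvc.2.2.2, hvb'.2.2.2, hvc'.2.2.2⟩
  have hwalkC : ∀ (W : List Q) (a : Q), a ∈ C → List.Chain (E T) a W →
      ∀ b, b ∈ C → (a :: W).getLast (List.cons_ne_nil _ _) = b →
      Relation.ReflTransGen A a b := by
    intro W
    induction W with
    | nil =>
      intro a _ _ b _ hl
      simp only [List.getLast_singleton] at hl
      exact hl ▸ Relation.ReflTransGen.refl
    | cons c W' ih =>
      intro a ha hch b hb hl
      rcases List.chain_cons.mp hch with ⟨hac, hch'⟩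
      rw [List.getLast_cons_cons] at hl
      have hRcb : R T c b := List.relationReflTransGen_of_exists_isChain_cons W' hch' hl
      have hcC : c ∈ C := ⟨ha.1.trans (Relation.ReflTransGen.single hac), hRcb.trans hb.2⟩
      exact Relation.ReflTransGen.head ⟨ha, hcC, hac⟩ (ih c hcC hch' b hb hl)
  have hCconn : ∀ p q, p ∈ C → q ∈ C → Relation.ReflTransGen A p q := by
    intro p q hp hq
    obtain ⟨W, hW, hWl⟩ :=
      List.exists_isChain_cons_of_relationReflTransGen (hp.2.trans hq.1)
    exact hwalkC W p hp hW q hq hWl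
  obtain ⟨P, hPnd, hPcov, hPmem, hPadj⟩ :=
    exists_path_cover A C hAsymm hAirr hAmem hAnc hAdeg hCconn ⟨x₀, hx₀C⟩
  set ψ : Q → ℕ := fun y => P.idxOf y with hψ
  have hmono : ∀ u v, u ∈ C → v ∈ C → E T u v → ψ v = ψ u + 1 ∨ ψ u = ψ v + 1 := by
    intro u v hu hv he
    exact hPadj u v ⟨hu, hv, he⟩
  have hinj : ∀ u v, u ∈ C → v ∈ C → ψ u = ψ v → u = v := by
    intro u v hu hv h
    have hup := hPcov u hu
    have hvp := hPcov v hv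
    have he1 := List.idxOf_get (List.idxOf_lt_length_iff.mpr hup)
    have he2 := List.idxOf_get (List.idxOf_lt_length_iff.mpr hvp)
    exact (he1.symm.trans (get_eq_get P _ _ h)).trans he2
  -- the finite orbit
  set Of : Finset Q := (Finset.range M).image (fun i => (s ^ i) x₀) with hOf
  have hOfmem : ∀ i : ℕ, (s ^ i) x₀ ∈ Of := by
    intro i
    have h3 : (s ^ i) x₀ = (s ^ (i % M)) x₀ := by
      conv_lhs => rw [show i = i % M + M * (i / M) from (Nat.mod_add_div i M).symm]
      exact hpowshift (i % M) (i / M)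
    rw [h3]
    exact Finset.mem_image.mpr ⟨i % M, Finset.mem_range.mpr (Nat.mod_lt _ (by omega)), rfl⟩
  have hOfC : ∀ w ∈ Of, w ∈ C := by
    intro w hw
    obtain ⟨i, _, rfl⟩ := Finset.mem_image.mp hw
    exact horbC i
  have hOfne : Of.Nonempty := ⟨x₀, hOfmem 0⟩
  obtain ⟨m₀, hm₀Of, hm₀min⟩ := Finset.exists_min_image Of ψ hOfne
  have hsOf : ∀ w ∈ Of, s w ∈ Of := by
    intro w hw
    obtain ⟨i, _, rfl⟩ := Finset.mem_image.mp hw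
    have h3 : s ((s ^ i) x₀) = (s ^ (i + 1)) x₀ := (end_pow_succ_apply s i x₀).symm
    rw [h3]
    exact hOfmem _
  have hpre : ∀ w ∈ Of, ∃ v ∈ Of, s v = w := by
    intro w hw
    obtain ⟨i, hi, rfl⟩ := Finset.mem_image.mp hw
    refine ⟨(s ^ (i + M - 1)) x₀, hOfmem _, ?_⟩
    rw [← end_pow_succ_apply s (i + M - 1) x₀, show i + M - 1 + 1 = i + M * 1 by omega,
      hpowshift]
  have hcancel : ∀ v w, v ∈ Of → w ∈ Of → s v = s w → v = w := by
    intro v w hv hw h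
    obtain ⟨i, hi, rfl⟩ := Finset.mem_image.mp hv
    obtain ⟨j, hj, rfl⟩ := Finset.mem_image.mp hw
    have h1' : (s ^ (i + 1)) x₀ = (s ^ (j + 1)) x₀ := by
      rw [end_pow_succ_apply, end_pow_succ_apply, h]
    have hMj : 1 ≤ M * (j + 1) := Nat.one_le_iff_ne_zero.mpr (by positivity)
    calc (s ^ i) x₀ = (s ^ (i + M * (j + 1))) x₀ := (hpowshift i (j + 1)).symm
      _ = (s ^ (M * (j + 1) - 1)) ((s ^ (i + 1)) x₀) := by
          rw [end_pow_mul_apply, show M * (j + 1) - 1 + (i + 1) = i + M * (j + 1) by omega]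
      _ = (s ^ (M * (j + 1) - 1)) ((s ^ (j + 1)) x₀) := by rw [h1']
      _ = (s ^ (j + M * (j + 1))) x₀ := by
          rw [end_pow_mul_apply, show M * (j + 1) - 1 + (j + 1) = j + M * (j + 1) by omega]
      _ = (s ^ j) x₀ := hpowshift j (j + 1)
  have hkey : ∀ w ∈ Of, w ≠ s m₀ → ψ (s m₀) < ψ w := by
    intro w hw hnew
    obtain ⟨v, hvOf, rfl⟩ := hpre w hw
    have hvm : v ≠ m₀ := fun h => hnew (by rw [h])
    have hψlt : ψ m₀ < ψ v := by
      have hle := hm₀min v hvOf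
      rcases Nat.lt_or_ge (ψ m₀) (ψ v) with h | h
      · exact h
      · exact absurd (hinj _ _ (hOfC _ hm₀Of) (hOfC _ hvOf) (by omega)).symm hvm
    have hsne : l₀.prod m₀ ≠ l₀.prod v := by
      rw [hl₀prod]
      intro h
      exact hvm (hcancel v m₀ hvOf hm₀Of h.symm)
    have htails : ∀ t ∈ l₀.tails, (t.prod : Function.End Q) m₀ ∈ C ∧ t.prod v ∈ C := by
      intro t ht
      rw [List.mem_tails] at ht
      obtain ⟨f, hf⟩ := ht
      have hsub : ∀ g ∈ t, g ∈ T := fun g hg => hl₀T g (by rw [← hf]; simp [hg])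
      have hfT : ∀ g ∈ f, g ∈ T := fun g hg => hl₀T g (by rw [← hf]; simp [hg])
      have key : ∀ z : Q, z ∈ C → s z ∈ C → t.prod z ∈ C := by
        intro z hz hsz
        have hfor : R T z (t.prod z) := reach_prod hT t hsub z
        have hback : R T (t.prod z) (s z) := by
          have h4 := reach_prod hT f hfT (t.prod z)
          have hpr : f.prod (t.prod z) = s z := by
            have : f.prod (t.prod z) = (f ++ t).prod z := by
              rw [List.prod_append]; rfl
            rw [this, hf, hl₀prod]
          rwa [hpr] at h4
        exact ⟨hz.1.trans hfor, hback.trans hsz.2⟩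
      constructor
      · exact key m₀ (hOfC _ hm₀Of) (hOfC _ (hsOf _ hm₀Of))
      · exact key v (hOfC _ hvOf) (hOfC _ (hsOf _ hvOf))
    have h5 := order_preserved hT C ψ hmono hinj l₀ hl₀T m₀ v htails hsne hψlt
    rwa [hl₀prod] at h5
  have hfix : s m₀ = m₀ := by
    by_contra hne'
    have h3 := hkey m₀ hm₀Of (fun h => hne' h.symm)
    have h4 := hm₀min (s m₀) (hsOf _ hm₀Of)
    omega
  obtain ⟨i, hi, hieq⟩ := Finset.mem_image.mp hm₀Of
  have hiM : i < M := Finset.mem_range.mp hi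
  apply hsx₀
  have hstep : (s ^ (i + 1)) x₀ = (s ^ i) x₀ := by
    rw [end_pow_succ_apply, hieq, hfix]
  calc s x₀ = (s ^ (M + 1)) x₀ := by rw [end_pow_succ_apply, hMx₀]
    _ = (s ^ (M - i)) ((s ^ (i + 1)) x₀) := by
        rw [end_pow_mul_apply, show M - i + (i + 1) = M + 1 by omega]
    _ = (s ^ (M - i)) ((s ^ i) x₀) := by rw [hstep]
    _ = (s ^ M) x₀ := by rw [end_pow_mul_apply, show M - i + i = M by omega]
    _ = x₀ := hMx₀

end Main

section Forward

variable {Q : Type*} [DecidableEq Q] {T : Set (Function.End Q)}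

theorem cycle_bad (k : ℕ) (hk : 3 ≤ k) (qq : Fin k → Q)
    (hqinj : Function.Injective qq)
    (hmem : ∀ i : Fin k, unitaryT (qq i) (qq (i + ⟨1, Nat.lt_of_lt_of_le (by decide) ‹3 ≤ k›⟩)) ∈ T) :
    ∃ s ∈ Subsemigroup.closure T, ∀ m : ℕ, 1 ≤ m → s ^ (m + 1) ≠ s ^ m := by
  have hk0 : 0 < k := by omega
  set g : ℕ → Q := fun n => qq ⟨n % k, Nat.mod_lt _ hk0⟩ with hg
  have ginj : ∀ a b : ℕ, g a = g b → a % k = b % k := by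
    intro a b h
    exact congrArg Fin.val (hqinj h)
  set F : ℕ → Function.End Q := fun n => unitaryT (g n) (g (n + 1)) with hF
  have hFT : ∀ n, n < k → F n ∈ T := by
    intro n hn
    have h1 : g n = qq ⟨n, hn⟩ := congrArg qq (Fin.ext (Nat.mod_eq_of_lt hn))
    have h2 : g (n + 1) = qq (⟨n, hn⟩ + ⟨1, by omega⟩) :=
      congrArg qq (Fin.ext (by simp [Fin.add_def]))
    have h3 : F n = unitaryT (g n) (g (n + 1)) := rfl
    rw [h3, h1, h2]
    exact hmem _
  set w : ℕ → Function.End Q := fun a => ((List.range a).map F).prod with hw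
  have hwsucc : ∀ a, w (a + 1) = w a * F a := by
    intro a
    simp only [hw, List.range_succ, List.map_append, List.prod_append,
      List.map_cons, List.map_nil, List.prod_cons, List.prod_nil, mul_one]
  have hwapp : ∀ a x, w (a + 1) x = w a (F a x) := by
    intro a x
    rw [hwsucc]
    rfl
  have hw0 : ∀ x, w 0 x = x := fun x => rfl
  have hFfix : ∀ n i, n < k → i < k → n ≠ i → F n (g i) = g i := by
    intro n i hn hi hne
    apply unitaryT_ne
    intro h
    have := ginj i n h
    rw [Nat.mod_eq_of_lt hi, Nat.mod_eq_of_lt hn] at this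
    exact hne this.symm
  have hFmove : ∀ i, F i (g i) = g (i + 1) := fun i => unitaryT_self _ _
  have W1 : ∀ a i, a ≤ i → i < k → w a (g i) = g i := by
    intro a
    induction a with
    | zero => intro i _ _; exact hw0 _
    | succ a iha =>
      intro i hai hik
      rw [hwapp, hFfix a i (by omega) hik (by omega)]
      exact iha i (by omega) hik
  have W3 : ∀ a, 1 ≤ a → a ≤ k → w a (g 0) = g 1 := by
    intro a
    induction a with
    | zero => intro h; omega
    | succ a iha =>
      intro _ hak
      rcases Nat.eq_zero_or_pos a with rfl | ha
      · rw [hwapp, hFmove 0]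
        exact hw0 _
      · rw [hwapp, hFfix a 0 (by omega) (by omega) (by omega)]
        exact iha ha (by omega)
  have W2 : ∀ a, a ≤ k → ∀ i, 1 ≤ i → i < a → i + 1 < k → w a (g i) = g (i + 1) := by
    intro a
    induction a with
    | zero => intro _ i _ h _; omega
    | succ a iha =>
      intro hak i h1i hia hik
      rcases Nat.lt_or_ge i a with h | h
      · rw [hwapp, hFfix a i (by omega) (by omega) (by omega)]
        exact iha (by omega) i h1i h hik
      · have hiea : i = a := by omega
        subst hiea
        rw [hwapp, hFmove]
        exact W1 i (i + 1) (by omega) hik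
  have hgk : g k = g 0 := congrArg qq (Fin.ext (by simp [Nat.mod_self]))
  have hucyc : ∀ i, 1 ≤ i → i < k → w k (g i) = g (1 + i % (k - 1)) := by
    intro i h1 h2
    rcases Nat.lt_or_ge i (k - 1) with h | h
    · rw [W2 k le_rfl i h1 (by omega) (by omega)]
      exact congrArg g (by rw [Nat.mod_eq_of_lt h]; omega)
    · have hieq : i = k - 1 := by omega
      subst hieq
      have h4 := hwapp (k - 1) (g (k - 1))
      rw [hFmove (k - 1)] at h4
      have h5 : g (k - 1 + 1) = g 0 := by rw [show k - 1 + 1 = k by omega]; exact hgk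
      rw [h5, W3 (k - 1) (by omega) (by omega)] at h4
      rw [show k - 1 + 1 = k by omega] at h4
      rw [h4]
      exact congrArg g (by rw [Nat.mod_self])
  have hpow : ∀ m : ℕ, ((w k) ^ m) (g 1) = g (1 + m % (k - 1)) := by
    intro m
    induction m with
    | zero =>
      have h0 : ((w k) ^ 0) (g 1) = g 1 := rfl
      rw [h0, Nat.zero_mod]
    | succ m ihm =>
      have hb : 1 + m % (k - 1) < k := by
        have := Nat.mod_lt m (show 0 < k - 1 by omega)
        omega
      rw [end_pow_succ_apply, ihm, hucyc (1 + m % (k - 1)) (by omega) hb]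
      refine congrArg g ?_
      have hmod : (1 + m % (k - 1)) % (k - 1) = (m + 1) % (k - 1) := by
        have h6 : (1 + m % (k - 1)) % (k - 1) = (1 + m) % (k - 1) :=
          Nat.ModEq.add_left 1 (Nat.mod_modEq m (k - 1))
        rw [h6, Nat.add_comm 1 m]
      rw [hmod]
  have humem : w k ∈ Subsemigroup.closure T := by
    apply list_prod_mem_closure
    · intro h
      have := congrArg List.length h
      simp at this
      omega
    · intro gg hgg
      simp only [List.mem_map, List.mem_range] at hgg
      obtain ⟨n6, hn6, rfl⟩ := hgg
      exact hFT n6 hn6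
  refine ⟨w k, humem, ?_⟩
  intro m hm heq
  have h1' := hpow m
  have h2' := hpow (m + 1)
  rw [heq, h1'] at h2'
  have h3' := ginj _ _ h2'
  have hb1 : 1 + m % (k - 1) < k := by
    have := Nat.mod_lt m (show 0 < k - 1 by omega)
    omega
  have hb2 : 1 + (m + 1) % (k - 1) < k := by
    have := Nat.mod_lt (m + 1) (show 0 < k - 1 by omega)
    omega
  rw [Nat.mod_eq_of_lt hb1, Nat.mod_eq_of_lt hb2] at h3'
  have h4' : m % (k - 1) = (m + 1) % (k - 1) := by omega
  have h5' : (k - 1) ∣ (m + 1 - m) := (Nat.modEq_iff_dvd' (by omega)).mp h4'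
  rw [show m + 1 - m = 1 by omega] at h5'
  have := Nat.le_of_dvd one_pos h5'
  omega

theorem t6_bad (q0 q1 q2 q3 : Q)
    (h01 : q0 ≠ q1) (h02 : q0 ≠ q2) (h03 : q0 ≠ q3)
    (h12 : q1 ≠ q2) (h13 : q1 ≠ q3) (h23 : q2 ≠ q3)
    (m01 : unitaryT q0 q1 ∈ T) (m10 : unitaryT q1 q0 ∈ T)
    (m12 : unitaryT q1 q2 ∈ T) (m13 : unitaryT q1 q3 ∈ T)
    (m21 : unitaryT q2 q1 ∈ T) (m31 : unitaryT q3 q1 ∈ T) :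
    ∃ s ∈ Subsemigroup.closure T, ∀ m : ℕ, 1 ≤ m → s ^ (m + 1) ≠ s ^ m := by
  set u : Function.End Q := unitaryT q1 q3 * (unitaryT q2 q1 * (unitaryT q1 q0 *
    (unitaryT q3 q1 * (unitaryT q1 q2 * unitaryT q0 q1)))) with hu
  have humem : u ∈ Subsemigroup.closure T := by
    rw [hu]
    exact Subsemigroup.mul_mem _ (Subsemigroup.subset_closure m13)
      (Subsemigroup.mul_mem _ (Subsemigroup.subset_closure m21)
        (Subsemigroup.mul_mem _ (Subsemigroup.subset_closure m10)
          (Subsemigroup.mul_mem _ (Subsemigroup.subset_closure m31)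
            (Subsemigroup.mul_mem _ (Subsemigroup.subset_closure m12)
              (Subsemigroup.subset_closure m01)))))
  have hu0 : u q0 = q3 := by
    show (unitaryT q1 q3) ((unitaryT q2 q1) ((unitaryT q1 q0) ((unitaryT q3 q1)
      ((unitaryT q1 q2) ((unitaryT q0 q1) q0))))) = q3
    rw [unitaryT_self q0 q1, unitaryT_self q1 q2, unitaryT_ne q1 h23,
      unitaryT_ne q0 h12.symm, unitaryT_self q2 q1, unitaryT_self q1 q3]
  have hu3 : u q3 = q0 := by
    show (unitaryT q1 q3) ((unitaryT q2 q1) ((unitaryT q1 q0) ((unitaryT q3 q1)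
      ((unitaryT q1 q2) ((unitaryT q0 q1) q3))))) = q0
    rw [unitaryT_ne q1 h03.symm, unitaryT_ne q2 h13.symm, unitaryT_self q3 q1,
      unitaryT_self q1 q0, unitaryT_ne q1 h02, unitaryT_ne q3 h01]
  have halt : ∀ m : ℕ, ((u ^ m) q0 = q0 ∧ (u ^ (m + 1)) q0 = q3) ∨
      ((u ^ m) q0 = q3 ∧ (u ^ (m + 1)) q0 = q0) := by
    intro m
    induction m with
    | zero =>
      left
      refine ⟨rfl, ?_⟩
      rw [end_pow_succ_apply]
      show u q0 = q3
      exact hu0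
    | succ m ihm =>
      rcases ihm with ⟨ha, hb⟩ | ⟨ha, hb⟩
      · right
        refine ⟨hb, ?_⟩
        rw [end_pow_succ_apply, hb, hu3]
      · left
        refine ⟨hb, ?_⟩
        rw [end_pow_succ_apply, hb, hu0]
  refine ⟨u, humem, ?_⟩
  intro m hm heq
  rcases halt m with ⟨ha, hb⟩ | ⟨ha, hb⟩
  · rw [heq, ha] at hb
    exact h03 hb
  · rw [heq, ha] at hb
    exact h03 hb.symm
  
end Forward

end Stmt10Aux


/-- For a set `T` of unitary transformations of a finite set `Q`, the subsemigroup
generated by `T` is aperiodic if and only if `T` contains no `k`-cyclic subset with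
`k ≥ 3` and no subset of type `T6`. -/
theorem statement10 {Q : Type*} [Finite Q] [DecidableEq Q] (T : Set (Function.End Q))
    (hT : ∀ t ∈ T, ∃ p q : Q, p ≠ q ∧ t = unitaryT p q) :
    (∀ s ∈ Subsemigroup.closure T, ∃ k : ℕ, 1 ≤ k ∧ s ^ (k + 1) = s ^ k) ↔
      (¬ ∃ (k : ℕ) (hk : 3 ≤ k) (q : Fin k → Q), Function.Injective q ∧
          ∀ i : Fin k, unitaryT (q i) (q (i + ⟨1, by omega⟩)) ∈ T) ∧
      (¬ ∃ q0 q1 q2 q3 : Q,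
          q0 ≠ q1 ∧ q0 ≠ q2 ∧ q0 ≠ q3 ∧ q1 ≠ q2 ∧ q1 ≠ q3 ∧ q2 ≠ q3 ∧
          unitaryT q0 q1 ∈ T ∧ unitaryT q1 q0 ∈ T ∧ unitaryT q1 q2 ∈ T ∧
          unitaryT q1 q3 ∈ T ∧ unitaryT q2 q1 ∈ T ∧ unitaryT q3 q1 ∈ T) := by
  constructor
  · intro hap
    constructor
    · rintro ⟨k, hk, qq, hqinj, hmem⟩
      obtain ⟨s, hs, hbad⟩ := Stmt10Aux.cycle_bad k hk qq hqinj hmem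
      obtain ⟨k', hk', heq⟩ := hap s hs
      exact hbad k' hk' heq
    · rintro ⟨q0, q1, q2, q3, h01, h02, h03, h12, h13, h23,
        m01, m10, m12, m13, m21, m31⟩
      obtain ⟨s, hs, hbad⟩ :=
        Stmt10Aux.t6_bad q0 q1 q2 q3 h01 h02 h03 h12 h13 h23 m01 m10 m12 m13 m21 m31
      obtain ⟨k', hk', heq⟩ := hap s hs
      exact hbad k' hk' heq
  · rintro ⟨h1, h2⟩
    exact Stmt10Aux.aperiodic_of_no_patterns T hT h1 h2
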